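/- Let J be an index set, let (n_j)_{j ∈ J} be a family of positive natural numbers, and let A = Π_{j ∈ J} M_{n_j}(ℂ) be the product of the matrix algebras M_{n_j}(ℂ), with componentwise operations. Every 2-local inner derivation Δ : A → A is a derivation, i.e., Δ is additive, ℂ-homogeneous, and satisfies Δ(x·y) = Δ(x)·y + x·Δ(y) for all x, y ∈ A. -/

import Mathlib

open Matrix

namespace TwoLocalAux

lemma trace_mul_basis {n : ℕ} (A : Matrix (Fin n) (Fin n) ℂ) (i j : Fin n) :
    (A * Matrix.single i j 1).trace = A j i := by
  rw [Matrix.trace, Finset.sum_eq_single j]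
  · simp [Matrix.diag]
  · intro b _ hb
    simp [Matrix.diag, Matrix.mul_single_apply_of_ne _ _ _ _ _ hb]
  · simp

lemma eq_zero_of_trace {n : ℕ} (A : Matrix (Fin n) (Fin n) ℂ)
    (h : ∀ N : Matrix (Fin n) (Fin n) ℂ, (A * N).trace = 0) : A = 0 := by
  ext i j
  have h0 := h (Matrix.single j i 1)
  rw [trace_mul_basis] at h0
  simpa using h0

variable {n : ℕ} (Δ : Matrix (Fin n) (Fin n) ℂ → Matrix (Fin n) (Fin n) ℂ)
  (h2 : ∀ x y : Matrix (Fin n) (Fin n) ℂ,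
    ∃ a : Matrix (Fin n) (Fin n) ℂ, Δ x = a * x - x * a ∧ Δ y = a * y - y * a)

include h2

lemma skew (x y : Matrix (Fin n) (Fin n) ℂ) : (Δ x * y).trace + (Δ y * x).trace = 0 := by
  obtain ⟨a, hx, hy⟩ := h2 x y
  rw [hx, hy, sub_mul, sub_mul, Matrix.trace_sub, Matrix.trace_sub,
    mul_assoc a x y, mul_assoc x a y, mul_assoc a y x,
    mul_assoc y a x, Matrix.trace_mul_comm x (a * y), Matrix.trace_mul_comm y (a * x),
    mul_assoc a y x, mul_assoc a x y]
  ring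

lemma hadd (x y : Matrix (Fin n) (Fin n) ℂ) : Δ (x + y) = Δ x + Δ y := by
  have key : Δ (x + y) - (Δ x + Δ y) = 0 := by
    apply eq_zero_of_trace
    intro N
    have h1 := skew Δ h2 (x + y) N
    have h2' := skew Δ h2 x N
    have h3 := skew Δ h2 y N
    have e : (Δ N * (x + y)).trace = (Δ N * x).trace + (Δ N * y).trace := by
      rw [mul_add, Matrix.trace_add]
    rw [sub_mul, add_mul, Matrix.trace_sub, Matrix.trace_add]
    linear_combination h1 - h2' - h3 - e
  rw [sub_eq_zero] at key
  exact key

lemma hsmul (c : ℂ) (x : Matrix (Fin n) (Fin n) ℂ) : Δ (c • x) = c • Δ x := by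
  have key : Δ (c • x) - c • Δ x = 0 := by
    apply eq_zero_of_trace
    intro N
    have h1 := skew Δ h2 (c • x) N
    have h2' := skew Δ h2 x N
    have e : (Δ N * (c • x)).trace = c * (Δ N * x).trace := by
      rw [mul_smul_comm, Matrix.trace_smul, smul_eq_mul]
    rw [sub_mul, Matrix.trace_sub, smul_mul_assoc, Matrix.trace_smul, smul_eq_mul]
    linear_combination h1 - e - c * h2'
  rw [sub_eq_zero] at key
  exact key

end TwoLocalAux

namespace Stage2

theorem matrix_inner {n : ℕ} (hn : 0 < n)
    (Δ : Matrix (Fin n) (Fin n) ℂ → Matrix (Fin n) (Fin n) ℂ)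
    (h2 : ∀ x y : Matrix (Fin n) (Fin n) ℂ,
      ∃ a : Matrix (Fin n) (Fin n) ℂ, Δ x = a * x - x * a ∧ Δ y = a * y - y * a) :
    ∃ c : Matrix (Fin n) (Fin n) ℂ, ∀ x, Δ x = c * x - x * c := by
  classical
  set u : Matrix (Fin n) (Fin n) ℂ := Matrix.diagonal (fun i => ((i : ℕ) : ℂ)) with hu
  obtain ⟨b, hb, -⟩ := h2 u u
  set E : Matrix (Fin n) (Fin n) ℂ → Matrix (Fin n) (Fin n) ℂ :=
    fun x => Δ x - (b * x - x * b) with hE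
  have hEadd : ∀ x y, E (x + y) = E x + E y := by
    intro x y
    simp only [hE]
    rw [TwoLocalAux.hadd Δ h2]
    noncomm_ring
  have hEsmul : ∀ (c : ℂ) x, E (c • x) = c • E x := by
    intro c x
    simp only [hE]
    rw [TwoLocalAux.hsmul Δ h2]
    rw [smul_sub, smul_sub, mul_smul_comm, smul_mul_assoc]
  -- potential form of E
  have pot : ∀ x, ∃ g : Fin n → ℂ, ∀ i j, E x i j = (g i - g j) * x i j := by
    intro x
    obtain ⟨a, hau, hax⟩ := h2 u x
    have h' : a * u - u * a = b * u - u * b := hau.symm.trans hb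
    have key : (a - b) * u = u * (a - b) := by
      rw [sub_mul, mul_sub]
      exact sub_eq_sub_iff_sub_eq_sub.mp h'
    have hd : a - b = Matrix.diagonal (fun i => (a - b) i i) := by
      ext i j
      by_cases hij : i = j
      · subst hij; simp
      · have h0 := Matrix.ext_iff.mpr key i j
        rw [Matrix.mul_diagonal, Matrix.diagonal_mul] at h0
        have hne : ((j : ℕ) : ℂ) ≠ ((i : ℕ) : ℂ) := by
          intro hh
          exact hij (Fin.ext (by exact_mod_cast hh.symm))
        have h3 : (a - b) i j * (((j : ℕ) : ℂ) - ((i : ℕ) : ℂ)) = 0 := by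
          linear_combination h0
        rcases mul_eq_zero.mp h3 with h4 | h4
        · rw [Matrix.diagonal_apply_ne _ hij]; exact h4
        · exact absurd (sub_eq_zero.mp h4) hne
    refine ⟨fun i => (a - b) i i, fun i j => ?_⟩
    have hEx : E x = (a - b) * x - x * (a - b) := by
      simp only [hE]
      rw [hax]
      noncomm_ring
    rw [hEx, hd]
    simp only [Matrix.sub_apply, Matrix.diagonal_mul, Matrix.mul_diagonal,
      Matrix.diagonal_apply_eq]
    ring
  -- basis coefficients
  set μ : Fin n → Fin n → ℂ := fun i j => E (Matrix.single i j 1) i j with hμ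
  have hbasis : ∀ i j, E (Matrix.single i j 1) = μ i j • Matrix.single i j 1 := by
    intro i j
    obtain ⟨g, hg⟩ := pot (Matrix.single i j 1)
    have hμij : μ i j = g i - g j := by
      simp only [hμ]
      rw [hg i j]
      simp
    ext p q
    rw [hg p q]
    by_cases hpq : i = p ∧ j = q
    · obtain ⟨rfl, rfl⟩ := hpq
      simp [hμij]
    · simp [Matrix.single_apply_of_ne _ _ _ _ _ hpq]
  have hμdiag : ∀ i, μ i i = 0 := by
    intro i
    obtain ⟨g, hg⟩ := pot (Matrix.single i i 1)
    simp only [hμ]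
    rw [hg i i]
    simp
  have hμskew : ∀ i j, μ j i = -μ i j := by
    intro i j
    by_cases hij : i = j
    · subst hij; rw [hμdiag]; simp [hμdiag]
    · obtain ⟨g, hg⟩ := pot (Matrix.single i j 1 + Matrix.single j i 1)
      have hsum := hEadd (Matrix.single i j 1) (Matrix.single j i 1)
      rw [hbasis i j, hbasis j i] at hsum
      have e1' : g i - g j = μ i j := by
        have h0 := Matrix.ext_iff.mpr hsum i j
        rw [hg i j] at h0
        simpa [Matrix.add_apply, Matrix.smul_apply, hij, Ne.symm hij] using h0
      have e1 : μ i j = g i - g j := e1'.symm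
      have e2' : g j - g i = μ j i := by
        have h0 := Matrix.ext_iff.mpr hsum j i
        rw [hg j i] at h0
        simpa [Matrix.add_apply, Matrix.smul_apply, hij, Ne.symm hij] using h0
      have e2 : μ j i = g j - g i := e2'.symm
      rw [e1, e2]
      ring
  set i0 : Fin n := ⟨0, hn⟩ with hi0
  have hμcoc : ∀ i j, μ i j = μ i i0 - μ j i0 := by
    intro i j
    by_cases hij : i = j
    · rw [hij, hμdiag]; ring
    by_cases hii0 : i = i0
    · rw [hii0, hμdiag, hμskew]; ring
    by_cases hji0 : j = i0
    · rw [hji0, hμdiag]; ring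
    · obtain ⟨g, hg⟩ := pot (Matrix.single i j 1 + Matrix.single j i0 1 + Matrix.single i0 i 1)
      have hsum := hEadd (Matrix.single i j 1 + Matrix.single j i0 1) (Matrix.single i0 i 1)
      rw [hEadd (Matrix.single i j 1) (Matrix.single j i0 1),
        hbasis i j, hbasis j i0, hbasis i0 i] at hsum
      have e1' : g i - g j = μ i j := by
        have h0 := Matrix.ext_iff.mpr hsum i j
        rw [hg i j] at h0
        simpa [Matrix.add_apply, Matrix.smul_apply, hij, Ne.symm hij, hii0, Ne.symm hii0, hji0, Ne.symm hji0] using h0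
      have e1 : μ i j = g i - g j := e1'.symm
      have e2' : g j - g i0 = μ j i0 := by
        have h0 := Matrix.ext_iff.mpr hsum j i0
        rw [hg j i0] at h0
        simpa [Matrix.add_apply, Matrix.smul_apply, hij, Ne.symm hij, hii0, Ne.symm hii0, hji0, Ne.symm hji0] using h0
      have e2 : μ j i0 = g j - g i0 := e2'.symm
      have e3' : g i0 - g i = μ i0 i := by
        have h0 := Matrix.ext_iff.mpr hsum i0 i
        rw [hg i0 i] at h0
        simpa [Matrix.add_apply, Matrix.smul_apply, hij, Ne.symm hij, hii0, Ne.symm hii0, hji0, Ne.symm hji0] using h0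
      have e3 : μ i0 i = g i0 - g i := e3'.symm
      have e4 : μ i i0 = -μ i0 i := by rw [hμskew]
      rw [e1, e2, e4, e3]
      ring
  -- conclusion
  set Dm : Matrix (Fin n) (Fin n) ℂ := Matrix.diagonal (fun i => μ i i0) with hDm
  have hbasisD : ∀ i j, E (Matrix.single i j 1)
      = Dm * Matrix.single i j 1 - Matrix.single i j 1 * Dm := by
    intro i j
    rw [hbasis i j]
    ext p q
    by_cases hpq : i = p ∧ j = q
    · obtain ⟨rfl, rfl⟩ := hpq
      simp only [Matrix.smul_apply, Matrix.sub_apply, Matrix.diagonal_mul, Matrix.mul_diagonal,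
        Matrix.single_apply_same, hDm, smul_eq_mul]
      rw [hμcoc i j]
      ring
    · simp [hDm, Matrix.diagonal_mul, Matrix.mul_diagonal,
        Matrix.single_apply_of_ne _ _ _ _ _ hpq]
  have hGzero : ∀ x, E x = Dm * x - x * Dm := by
    intro x
    let G : Matrix (Fin n) (Fin n) ℂ →ₗ[ℂ] Matrix (Fin n) (Fin n) ℂ :=
      { toFun := fun y => E y - (Dm * y - y * Dm)
        map_add' := by
          intro y z
          show E (y + z) - (Dm * (y + z) - (y + z) * Dm)
            = (E y - (Dm * y - y * Dm)) + (E z - (Dm * z - z * Dm))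
          rw [hEadd]
          noncomm_ring
        map_smul' := by
          intro c y
          show E (c • y) - (Dm * (c • y) - (c • y) * Dm) = c • (E y - (Dm * y - y * Dm))
          rw [hEsmul]
          simp only [mul_smul_comm, smul_mul_assoc, smul_sub]
        }
    have hGbasis : ∀ (i j : Fin n) (cc : ℂ), G (Matrix.single i j cc) = 0 := by
      intro i j cc
      have h1 : Matrix.single i j cc = cc • Matrix.single i j 1 := by simp
      have h2' : G (Matrix.single i j 1) = 0 := by
        show E (Matrix.single i j 1) - (Dm * Matrix.single i j 1 - Matrix.single i j 1 * Dm) = 0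
        rw [hbasisD]
        exact sub_self _
      rw [h1, G.map_smul, h2', smul_zero]
    have hx : G x = 0 := by
      nth_rewrite 1 [matrix_eq_sum_single x]
      rw [map_sum]
      refine Finset.sum_eq_zero fun i _ => ?_
      rw [map_sum]
      refine Finset.sum_eq_zero fun j _ => ?_
      exact hGbasis i j _
    have hx' : E x - (Dm * x - x * Dm) = 0 := hx
    exact sub_eq_zero.mp hx'
  refine ⟨b + Dm, fun x => ?_⟩
  have h1 := hGzero x
  simp only [hE] at h1
  rw [sub_eq_iff_eq_add] at h1
  rw [h1]
  noncomm_ring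

end Stage2

/-- Every 2-local inner derivation on a product of complex matrix algebras
`Π_j M_{n_j}(ℂ)` is a derivation. -/
theorem twoLocal_inner_derivation_is_derivation_product_Mn
    (J : Type*) (n : J → ℕ) (hn : ∀ j, 0 < n j)
    (Δ : (∀ j, Matrix (Fin (n j)) (Fin (n j)) ℂ) →
         (∀ j, Matrix (Fin (n j)) (Fin (n j)) ℂ))
    (h2loc : ∀ x y : ∀ j, Matrix (Fin (n j)) (Fin (n j)) ℂ,
      ∃ a : ∀ j, Matrix (Fin (n j)) (Fin (n j)) ℂ,
        Δ x = a * x - x * a ∧ Δ y = a * y - y * a) :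
    (∀ x y, Δ (x + y) = Δ x + Δ y) ∧
    (∀ (c : ℂ) x, Δ (c • x) = c • Δ x) ∧
    (∀ x y, Δ (x * y) = Δ x * y + x * Δ y) := by
  classical
  have key : ∀ j : J, ∃ c : Matrix (Fin (n j)) (Fin (n j)) ℂ,
      ∀ x : (∀ j, Matrix (Fin (n j)) (Fin (n j)) ℂ), Δ x j = c * x j - x j * c := by
    intro j
    set Δj : Matrix (Fin (n j)) (Fin (n j)) ℂ → Matrix (Fin (n j)) (Fin (n j)) ℂ :=
      fun N => Δ (Pi.single j N) j with hΔj
    have h2j : ∀ N N' : Matrix (Fin (n j)) (Fin (n j)) ℂ,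
        ∃ a, Δj N = a * N - N * a ∧ Δj N' = a * N' - N' * a := by
      intro N N'
      obtain ⟨a, h1, h2⟩ := h2loc (Pi.single j N) (Pi.single j N')
      refine ⟨a j, ?_, ?_⟩
      · have := congrFun h1 j
        simpa [hΔj, Pi.sub_apply, Pi.mul_apply] using this
      · have := congrFun h2 j
        simpa [hΔj, Pi.sub_apply, Pi.mul_apply] using this
    obtain ⟨c, hc⟩ := Stage2.matrix_inner (hn j) Δj h2j
    refine ⟨c, fun x => ?_⟩
    obtain ⟨a, h1, h2⟩ := h2loc x (Pi.single j (x j))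
    have e1 : Δ x j = a j * x j - x j * a j := by
      have := congrFun h1 j
      simpa [Pi.sub_apply, Pi.mul_apply] using this
    have e2 : Δj (x j) = a j * x j - x j * a j := by
      have := congrFun h2 j
      simpa [hΔj, Pi.sub_apply, Pi.mul_apply] using this
    rw [e1, ← e2, hc]
  choose c hc using key
  have hΔ : ∀ x, Δ x = c * x - x * c := by
    intro x
    funext j
    simpa [Pi.sub_apply, Pi.mul_apply] using hc j x
  refine ⟨fun x y => ?_, fun r x => ?_, fun x y => ?_⟩
  · rw [hΔ, hΔ, hΔ]
    noncomm_ring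
  · rw [hΔ, hΔ]
    rw [smul_sub, mul_smul_comm, smul_mul_assoc]
  · rw [hΔ, hΔ, hΔ]
    noncomm_ring
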